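/- arXiv:1408.0815 — 3 statements merged into one kernel-verified Lean document; each statement's English description precedes it below -/
import Mathlib

section
/- Let σ, h, ψ, Ê be as above and define H(u,v,α) = v²/2 + γu²/4 + ψ(α) + (α + Êu)²/(2Ê). Then there exist constants μ, μ' > 0 such that μ·I ≤ D²H(u,v,α) ≤ μ'·I for all (u,v,α) ∈ ℝ³, i.e., H is uniformly convex with bounded Hessian. -/
private lemma stmt_2_aux (W0 W1 W2 C dl du g Eh : ℝ) (hg : 0 < g) (hdl : 0 < dl)
    (hdu : 0 < du) (hE : 0 < Eh) (hcl : dl ≤ C) (hcu : C ≤ du) :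
    (g / 2 ⊓ (1 ⊓ dl)) * (W0 ^ 2 + W1 ^ 2 + W2 ^ 2) ≤
      W1 * W1 + g / 2 * W0 * W0 + C * W2 * W2 + Eh⁻¹ * (W2 + Eh * W0) * (W2 + Eh * W0) ∧
    W1 * W1 + g / 2 * W0 * W0 + C * W2 * W2 + Eh⁻¹ * (W2 + Eh * W0) * (W2 + Eh * W0) ≤
      (1 + g / 2 + du + 2 * Eh + 2 / Eh) * (W0 ^ 2 + W1 ^ 2 + W2 ^ 2) := by
  have hm1 : g / 2 ⊓ (1 ⊓ dl) ≤ g / 2 := min_le_left _ _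
  have hm2 : g / 2 ⊓ (1 ⊓ dl) ≤ 1 := le_trans (min_le_right _ _) (min_le_left _ _)
  have hm3 : g / 2 ⊓ (1 ⊓ dl) ≤ dl := le_trans (min_le_right _ _) (min_le_right _ _)
  have hEinv : 0 < Eh⁻¹ := by positivity
  have ht4 : 0 ≤ Eh⁻¹ * (W2 + Eh * W0) * (W2 + Eh * W0) := by
    rw [mul_assoc]; exact mul_nonneg hEinv.le (mul_self_nonneg _)
  constructor
  · nlinarith [mul_le_mul_of_nonneg_right hm3 (sq_nonneg W2),
      mul_le_mul_of_nonneg_right hcl (sq_nonneg W2),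
      mul_le_mul_of_nonneg_right hm1 (sq_nonneg W0),
      mul_le_mul_of_nonneg_right hm2 (sq_nonneg W1)]
  · have ht4u : Eh⁻¹ * (W2 + Eh * W0) * (W2 + Eh * W0)
        ≤ 2 * Eh⁻¹ * W2 ^ 2 + 2 * Eh * W0 ^ 2 := by
      have hsq : (W2 + Eh * W0) * (W2 + Eh * W0) ≤ 2 * W2 ^ 2 + 2 * (Eh * W0) ^ 2 := by
        nlinarith [sq_nonneg (W2 - Eh * W0)]
      have h2 := mul_le_mul_of_nonneg_left hsq hEinv.le
      calc Eh⁻¹ * (W2 + Eh * W0) * (W2 + Eh * W0)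
          = Eh⁻¹ * ((W2 + Eh * W0) * (W2 + Eh * W0)) := by ring
        _ ≤ Eh⁻¹ * (2 * W2 ^ 2 + 2 * (Eh * W0) ^ 2) := h2
        _ = 2 * Eh⁻¹ * W2 ^ 2 + 2 * Eh * (Eh⁻¹ * Eh) * W0 ^ 2 := by ring
        _ = 2 * Eh⁻¹ * W2 ^ 2 + 2 * Eh * W0 ^ 2 := by
            rw [inv_mul_cancel₀ (ne_of_gt hE)]; ring
    have hdiv : 2 / Eh = 2 * Eh⁻¹ := by ring
    rw [hdiv]
    linarith [mul_le_mul_of_nonneg_right hcu (sq_nonneg W2), ht4u,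
      sq_nonneg W0, sq_nonneg W1, sq_nonneg W2,
      mul_nonneg hg.le (sq_nonneg W1), mul_nonneg hg.le (sq_nonneg W2),
      mul_nonneg hdu.le (sq_nonneg W0), mul_nonneg hdu.le (sq_nonneg W1),
      mul_nonneg hE.le (sq_nonneg W1), mul_nonneg hE.le (sq_nonneg W2),
      mul_nonneg hEinv.le (sq_nonneg W0), mul_nonneg hEinv.le (sq_nonneg W1)]

set_option maxHeartbeats 1000000 in

/-- Uniform convexity with bounded Hessian of the relaxation entropy
`H(u,v,α) = v²/2 + γu²/4 + ψ(α) + (α + Êu)²/(2Ê)` for the elasticity system: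
there exist `μ, μ' > 0` with `μ I ≤ D²H ≤ μ' I` on `ℝ³`. -/
theorem stmt_2 (σ : ℝ → ℝ) (γ Γ E K : ℝ)
    (hσ : ContDiff ℝ 2 σ) (hσ0 : σ 0 = 0)
    (hγ : 0 < γ) (hbounds : ∀ u, γ < deriv σ u ∧ deriv σ u < Γ)
    (hK : ∀ u, |deriv (deriv σ) u| ≤ K)
    (hE : Γ < E) (h hinv : ℝ → ℝ) (hdef : ∀ u, h u = σ u - E * u)
    (hli : Function.LeftInverse hinv h) (hri : Function.RightInverse hinv h)
    (Ehat : ℝ) (hEhat : Ehat = E - γ / 2)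
    (ψ : ℝ → ℝ) (hψ : ∀ α, ψ α = ∫ ξ in (0:ℝ)..α, (-hinv ξ - ξ / Ehat))
    (H : EuclideanSpace ℝ (Fin 3) → ℝ)
    (hH : ∀ x : EuclideanSpace ℝ (Fin 3),
      H x = (x 1) ^ 2 / 2 + γ * (x 0) ^ 2 / 4 + ψ (x 2)
        + (x 2 + Ehat * x 0) ^ 2 / (2 * Ehat)) :
    ∃ μ μ' : ℝ, 0 < μ ∧ 0 < μ' ∧
      ∀ (x w : EuclideanSpace ℝ (Fin 3)),
        μ * ‖w‖ ^ 2 ≤ iteratedFDeriv ℝ 2 H x ![w, w] ∧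
        iteratedFDeriv ℝ 2 H x ![w, w] ≤ μ' * ‖w‖ ^ 2 := by
  have hhfun : h = fun u => σ u - E * u := funext hdef
  subst hhfun
  have hHfun : H = fun x : EuclideanSpace ℝ (Fin 3) =>
      (x 1) ^ 2 / 2 + γ * (x 0) ^ 2 / 4 + ψ (x 2)
        + (x 2 + Ehat * x 0) ^ 2 / (2 * Ehat) := funext hH
  subst hHfun
  -- basic scalar facts
  have hγΓ : γ < Γ := lt_trans (hbounds 0).1 (hbounds 0).2
  have hEhatpos : 0 < Ehat := by rw [hEhat]; linarith
  have hEγ : 0 < E - γ := by linarith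
  have hEΓ : 0 < E - Γ := by linarith
  -- hinv is differentiable
  have hσd : Differentiable ℝ σ := hσ.differentiable (by norm_num)
  have hh' : ∀ u, HasDerivAt (fun u => σ u - E * u) (deriv σ u - E) u := fun u => by
    have := (hσd u).hasDerivAt.sub ((hasDerivAt_id' u).const_mul E)
    rw [mul_one] at this; exact this
  have hanti : StrictAnti (fun u => σ u - E * u) := by
    apply strictAnti_of_deriv_neg
    intro u
    rw [(hh' u).deriv]
    have := (hbounds u).2; linarith
  have hantiinv : Antitone hinv := by
    intro a b hab
    have h1 := hanti.le_iff_ge (a := hinv a) (b := hinv b)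
    rw [show σ (hinv a) - E * hinv a = a from hri a,
      show σ (hinv b) - E * hinv b = b from hri b] at h1
    exact h1.mp hab
  have hsurj : Function.Surjective hinv := hli.surjective
  have hmono : Monotone (fun t => hinv (-t)) := fun a b hab => hantiinv (neg_le_neg hab)
  have hmsurj : Function.Surjective (fun t => hinv (-t)) := fun y => by
    obtain ⟨t, ht⟩ := hsurj y; exact ⟨-t, by simpa using ht⟩
  have hcont : Continuous hinv := by
    have h3 := (hmono.continuous_of_surjective hmsurj).comp continuous_neg
    have h2 : ((fun t => hinv (-t)) ∘ fun a : ℝ => -a) = hinv := by funext t; simp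
    rwa [h2] at h3
  have hinv' : ∀ a, HasDerivAt hinv ((deriv σ (hinv a) - E)⁻¹) a := fun a =>
    HasDerivAt.of_local_left_inverse hcont.continuousAt (hh' (hinv a))
      (by have := (hbounds (hinv a)).2; intro hzero; nlinarith [hzero])
      (Filter.Eventually.of_forall hri)
  -- ψ is C²
  have hF : Continuous (fun ξ => -hinv ξ - ξ / Ehat) := hcont.neg.sub (continuous_id.div_const Ehat)
  have hψ' : ∀ a, HasDerivAt ψ (-hinv a - a / Ehat) a := fun a => by
    have hfun : ψ = fun α => ∫ ξ in (0:ℝ)..α, (-hinv ξ - ξ / Ehat) := funext hψ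
    rw [hfun]
    exact intervalIntegral.integral_hasDerivAt_right (hF.intervalIntegrable _ _)
      (hF.stronglyMeasurable.stronglyMeasurableAtFilter) hF.continuousAt
  have hF' : ∀ a, HasDerivAt (fun ξ => -hinv ξ - ξ / Ehat)
      (-(deriv σ (hinv a) - E)⁻¹ - 1 / Ehat) a := fun a =>
    (hinv' a).neg.sub ((hasDerivAt_id a).div_const Ehat)
  -- bounds on ψ''
  set c : ℝ → ℝ := fun a => -(deriv σ (hinv a) - E)⁻¹ - 1 / Ehat with hc
  have hcbounds : ∀ a, (E - γ)⁻¹ - Ehat⁻¹ ≤ c a ∧ c a ≤ (E - Γ)⁻¹ - Ehat⁻¹ := by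
    intro a
    have hs1 := (hbounds (hinv a)).1
    have hs2 := (hbounds (hinv a)).2
    have hpos : 0 < E - deriv σ (hinv a) := by linarith
    have heq : c a = (E - deriv σ (hinv a))⁻¹ - Ehat⁻¹ := by
      rw [hc]
      simp only [one_div]
      rw [show deriv σ (hinv a) - E = -(E - deriv σ (hinv a)) by ring, inv_neg, neg_neg]
    rw [heq]
    constructor
    · have : (E - γ)⁻¹ ≤ (E - deriv σ (hinv a))⁻¹ :=
        inv_anti₀ hpos (by linarith)
      linarith
    · have : (E - deriv σ (hinv a))⁻¹ ≤ (E - Γ)⁻¹ :=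
        inv_anti₀ hEΓ (by linarith)
      linarith
  set δ : ℝ := (E - γ)⁻¹ - Ehat⁻¹ with hδ
  set δ' : ℝ := (E - Γ)⁻¹ - Ehat⁻¹ with hδ'
  have hδpos : 0 < δ := by
    rw [hδ]
    have : Ehat⁻¹ < (E - γ)⁻¹ := by
      apply inv_strictAnti₀ hEγ
      rw [hEhat]; linarith
    linarith
  have hδ'pos : 0 < δ' := by
    rw [hδ']
    have : Ehat⁻¹ < (E - Γ)⁻¹ := by
      apply inv_strictAnti₀ hEΓ
      rw [hEhat]; linarith
    linarith
  -- projections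
  set P : Fin 3 → (EuclideanSpace ℝ (Fin 3) →L[ℝ] ℝ) :=
    fun i => EuclideanSpace.proj i with hP
  have hPd : ∀ (i : Fin 3) (x : EuclideanSpace ℝ (Fin 3)),
      HasFDerivAt (fun y : EuclideanSpace ℝ (Fin 3) => y i) (P i) x := fun i x =>
    (P i).hasFDerivAt
  set q : EuclideanSpace ℝ (Fin 3) →L[ℝ] ℝ := P 2 + Ehat • P 0 with hq
  have hqd : ∀ x : EuclideanSpace ℝ (Fin 3),
      HasFDerivAt (fun y : EuclideanSpace ℝ (Fin 3) => y 2 + Ehat * y 0) q x := fun x =>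
    (hPd 2 x).add ((hPd 0 x).const_mul Ehat)
  -- first derivative
  set L : EuclideanSpace ℝ (Fin 3) → (EuclideanSpace ℝ (Fin 3) →L[ℝ] ℝ) := fun x =>
    (x 1) • P 1 + (γ * x 0 / 2) • P 0 + (-hinv (x 2) - x 2 / Ehat) • P 2
      + ((x 2 + Ehat * x 0) / Ehat) • q with hL
  have hHd : ∀ x, HasFDerivAt (fun x : EuclideanSpace ℝ (Fin 3) =>
      (x 1) ^ 2 / 2 + γ * (x 0) ^ 2 / 4 + ψ (x 2)
        + (x 2 + Ehat * x 0) ^ 2 / (2 * Ehat)) (L x) x := by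
    intro x
    have T1 : HasFDerivAt (fun y : EuclideanSpace ℝ (Fin 3) => (y 1) ^ 2 / 2)
        ((x 1) • P 1) x := by
      have hsq : HasDerivAt (fun t : ℝ => t ^ 2 / 2) (x 1) (x 1) := by
        simpa using (hasDerivAt_pow 2 (x 1)).div_const 2
      exact hsq.comp_hasFDerivAt x (hPd 1 x)
    have T2 : HasFDerivAt (fun y : EuclideanSpace ℝ (Fin 3) => γ * (y 0) ^ 2 / 4)
        ((γ * x 0 / 2) • P 0) x := by
      have hsq : HasDerivAt (fun t : ℝ => γ * t ^ 2 / 4) (γ * x 0 / 2) (x 0) := by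
        have := ((hasDerivAt_pow 2 (x 0)).const_mul γ).div_const 4
        exact this.congr_deriv (by push_cast; ring)
      exact hsq.comp_hasFDerivAt x (hPd 0 x)
    have T3 : HasFDerivAt (fun y : EuclideanSpace ℝ (Fin 3) => ψ (y 2))
        ((-hinv (x 2) - x 2 / Ehat) • P 2) x :=
      (hψ' (x 2)).comp_hasFDerivAt x (hPd 2 x)
    have T4 : HasFDerivAt (fun y : EuclideanSpace ℝ (Fin 3) =>
        (y 2 + Ehat * y 0) ^ 2 / (2 * Ehat)) (((x 2 + Ehat * x 0) / Ehat) • q) x := by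
      have hsq : HasDerivAt (fun t : ℝ => t ^ 2 / (2 * Ehat)) ((x 2 + Ehat * x 0) / Ehat)
          (x 2 + Ehat * x 0) := by
        have := (hasDerivAt_pow 2 (x 2 + Ehat * x 0)).div_const (2 * Ehat)
        exact this.congr_deriv (by push_cast; field_simp)
      exact hsq.comp_hasFDerivAt x (hqd x)
    exact ((T1.add T2).add T3).add T4
  -- second derivative
  have hLd : ∀ x, HasFDerivAt L
      ((P 1).smulRight (P 1) + ((γ / 2) • P 0).smulRight (P 0)
        + (c (x 2) • P 2).smulRight (P 2) + (Ehat⁻¹ • q).smulRight q) x := by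
    intro x
    have B1 : HasFDerivAt (fun y : EuclideanSpace ℝ (Fin 3) => (y 1) • P 1)
        ((P 1).smulRight (P 1)) x := (hPd 1 x).smul_const (P 1)
    have B2 : HasFDerivAt (fun y : EuclideanSpace ℝ (Fin 3) => (γ * y 0 / 2) • P 0)
        (((γ / 2) • P 0).smulRight (P 0)) x := by
      have hc2 : HasFDerivAt (fun y : EuclideanSpace ℝ (Fin 3) => γ * y 0 / 2)
          ((γ / 2) • P 0) x := by
        have h5 := ((hPd 0 x).const_mul γ).mul_const (2:ℝ)⁻¹
        have h6 : HasFDerivAt (fun y : EuclideanSpace ℝ (Fin 3) => γ * y 0 / 2)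
            ((2:ℝ)⁻¹ • (γ • P 0)) x := h5
        convert h6 using 1
        rw [smul_smul]
        congr 1
        ring
      exact hc2.smul_const (P 0)
    have B3 : HasFDerivAt
        (fun y : EuclideanSpace ℝ (Fin 3) => (-hinv (y 2) - y 2 / Ehat) • P 2)
        ((c (x 2) • P 2).smulRight (P 2)) x := by
      have hc3 : HasFDerivAt (fun y : EuclideanSpace ℝ (Fin 3) => -hinv (y 2) - y 2 / Ehat)
          (c (x 2) • P 2) x :=
        (hF' (x 2)).comp_hasFDerivAt (f := fun y : EuclideanSpace ℝ (Fin 3) => y 2) x (hPd 2 x)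
      exact hc3.smul_const (P 2)
    have B4 : HasFDerivAt
        (fun y : EuclideanSpace ℝ (Fin 3) => ((y 2 + Ehat * y 0) / Ehat) • q)
        ((Ehat⁻¹ • q).smulRight q) x := by
      have hc4 : HasFDerivAt (fun y : EuclideanSpace ℝ (Fin 3) => (y 2 + Ehat * y 0) / Ehat)
          (Ehat⁻¹ • q) x := by
        exact (hqd x).mul_const Ehat⁻¹
      exact hc4.smul_const q
    exact ((B1.add B2).add B3).add B4
  have hfd : fderiv ℝ (fun x : EuclideanSpace ℝ (Fin 3) =>
      (x 1) ^ 2 / 2 + γ * (x 0) ^ 2 / 4 + ψ (x 2)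
        + (x 2 + Ehat * x 0) ^ 2 / (2 * Ehat)) = L := funext fun y => (hHd y).fderiv
  -- the quadratic form
  have hquad : ∀ x w : EuclideanSpace ℝ (Fin 3),
      iteratedFDeriv ℝ 2 (fun x : EuclideanSpace ℝ (Fin 3) =>
        (x 1) ^ 2 / 2 + γ * (x 0) ^ 2 / 4 + ψ (x 2)
          + (x 2 + Ehat * x 0) ^ 2 / (2 * Ehat)) x ![w, w]
      = w 1 * w 1 + (γ / 2) * w 0 * w 0 + c (x 2) * w 2 * w 2
        + Ehat⁻¹ * (w 2 + Ehat * w 0) * (w 2 + Ehat * w 0) := by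
    intro x w
    rw [iteratedFDeriv_two_apply, hfd, (hLd x).fderiv]
    simp only [hq, hP, ContinuousLinearMap.add_apply, ContinuousLinearMap.smulRight_apply,
      ContinuousLinearMap.smul_apply, ContinuousLinearMap.coe_smul', Pi.smul_apply,
      PiLp.proj_apply, smul_eq_mul, Matrix.cons_val_zero, Matrix.cons_val_one, Matrix.head_cons]
  -- norm identity
  have hnorm : ∀ w : EuclideanSpace ℝ (Fin 3), ‖w‖ ^ 2 = w 0 ^ 2 + w 1 ^ 2 + w 2 ^ 2 := by
    intro w
    rw [EuclideanSpace.norm_eq, Real.sq_sqrt (by positivity)]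
    simp [Fin.sum_univ_three, Real.norm_eq_abs, sq_abs]
  refine ⟨min (γ / 2) (min 1 δ), 1 + γ / 2 + δ' + 2 * Ehat + 2 / Ehat, ?_, ?_, ?_⟩
  · exact lt_min (by linarith) (lt_min one_pos hδpos)
  · positivity
  · intro x w
    rw [hquad x w, hnorm w]
    obtain ⟨hcl, hcu⟩ := hcbounds (x 2)
    exact stmt_2_aux (w 0) (w 1) (w 2) (c (x 2)) δ δ' γ Ehat hγ hδpos hδ'pos hEhatpos hcl hcu
end

section
/- Let P satisfy 0 < γ < -∂_v P < Γ, |∂_Z P| < C̄, |∫₀^v P_{ZZ}(τ,Z)dτ| < C̄; E > Γ. Then |∂_{ZZ}(∫_{h(0,Z)}^α j(ξ,Z)dξ)| ≤ C̄(1 + C̄/(E-Γ)) for all α ∈ ℝ, Z ∈ [0,1]. -/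
open Set intervalIntegral MeasureTheory Filter Topology Asymptotics Metric

lemma contDeriv_snd_eq (Q QZ : ℝ → ℝ → ℝ)
    (hQ : ContDiff ℝ 1 (fun p : ℝ × ℝ => Q p.1 p.2))
    (hQZ : ∀ v z : ℝ, HasDerivAt (fun z => Q v z) (QZ v z) z) :
    Continuous (fun p : ℝ × ℝ => QZ p.1 p.2) := by
  have hd : Differentiable ℝ (fun p : ℝ × ℝ => Q p.1 p.2) := hQ.differentiable one_ne_zero
  have key : ∀ v z : ℝ, QZ v z = fderiv ℝ (fun p : ℝ × ℝ => Q p.1 p.2) (v, z) (0, 1) := by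
    intro v z
    have hcurve : HasDerivAt (fun t : ℝ => ((v, t) : ℝ × ℝ)) ((0 : ℝ), (1 : ℝ)) z :=
      (hasDerivAt_const z v).prodMk (hasDerivAt_id z)
    have h1 := (hd (v, z)).hasFDerivAt.comp_hasDerivAt z hcurve
    exact (hQZ v z).unique h1
  have hc : Continuous fun p : ℝ × ℝ =>
      fderiv ℝ (fun p : ℝ × ℝ => Q p.1 p.2) p ((0 : ℝ), (1 : ℝ)) :=
    (hQ.continuous_fderiv one_ne_zero).clm_apply continuous_const
  exact hc.congr (fun p => (key p.1 p.2).symm)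

lemma contDeriv_fst_eq (Q Qv : ℝ → ℝ → ℝ)
    (hQ : ContDiff ℝ 1 (fun p : ℝ × ℝ => Q p.1 p.2))
    (hQv : ∀ v z : ℝ, HasDerivAt (fun w => Q w z) (Qv v z) v) :
    Continuous (fun p : ℝ × ℝ => Qv p.1 p.2) := by
  have hd : Differentiable ℝ (fun p : ℝ × ℝ => Q p.1 p.2) := hQ.differentiable one_ne_zero
  have key : ∀ v z : ℝ, Qv v z = fderiv ℝ (fun p : ℝ × ℝ => Q p.1 p.2) (v, z) (1, 0) := by
    intro v z
    have hcurve : HasDerivAt (fun t : ℝ => ((t, z) : ℝ × ℝ)) ((1 : ℝ), (0 : ℝ)) v :=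
      (hasDerivAt_id v).prodMk (hasDerivAt_const v z)
    have h1 := (hd (v, z)).hasFDerivAt.comp_hasDerivAt v hcurve
    exact (hQv v z).unique h1
  have hc : Continuous fun p : ℝ × ℝ =>
      fderiv ℝ (fun p : ℝ × ℝ => Q p.1 p.2) p ((1 : ℝ), (0 : ℝ)) :=
    (hQ.continuous_fderiv one_ne_zero).clm_apply continuous_const
  exact hc.congr (fun p => (key p.1 p.2).symm)

lemma contDiff_snd_deriv (Q QZ : ℝ → ℝ → ℝ)
    (hQ : ContDiff ℝ 2 (fun p : ℝ × ℝ => Q p.1 p.2))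
    (hQZ : ∀ v z : ℝ, HasDerivAt (fun z => Q v z) (QZ v z) z) :
    ContDiff ℝ 1 (fun p : ℝ × ℝ => QZ p.1 p.2) := by
  have hd : Differentiable ℝ (fun p : ℝ × ℝ => Q p.1 p.2) :=
    hQ.differentiable (by norm_num)
  have key : ∀ v z : ℝ, QZ v z = fderiv ℝ (fun p : ℝ × ℝ => Q p.1 p.2) (v, z) (0, 1) := by
    intro v z
    have hcurve : HasDerivAt (fun t : ℝ => ((v, t) : ℝ × ℝ)) ((0 : ℝ), (1 : ℝ)) z :=
      (hasDerivAt_const z v).prodMk (hasDerivAt_id z)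
    have h1 := (hd (v, z)).hasFDerivAt.comp_hasDerivAt z hcurve
    exact (hQZ v z).unique h1
  have hfd : ContDiff ℝ 1 (fderiv ℝ (fun p : ℝ × ℝ => Q p.1 p.2)) :=
    hQ.fderiv_right (by norm_num)
  have : (fun p : ℝ × ℝ => QZ p.1 p.2)
      = fun p : ℝ × ℝ => fderiv ℝ (fun p : ℝ × ℝ => Q p.1 p.2) p ((0 : ℝ), (1 : ℝ)) :=
    funext fun p => key p.1 p.2
  rw [this]
  exact hfd.clm_apply contDiff_const

lemma param_deriv (Q QZ : ℝ → ℝ → ℝ)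
    (hQc : Continuous (fun p : ℝ × ℝ => Q p.1 p.2))
    (hQZc : Continuous (fun p : ℝ × ℝ => QZ p.1 p.2))
    (hQZ : ∀ v z : ℝ, HasDerivAt (fun z => Q v z) (QZ v z) z)
    {u : ℝ → ℝ} {s : Set ℝ} {Z u' : ℝ}
    (hu : HasDerivWithinAt u u' s Z) :
    HasDerivWithinAt (fun z => ∫ v in (0:ℝ)..(u z), Q v z)
      (Q (u Z) Z * u' + ∫ v in (0:ℝ)..(u Z), QZ v Z) s Z := by
  have hQv : ∀ z : ℝ, Continuous (fun v => Q v z) := fun z =>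
    hQc.comp (continuous_id.prodMk continuous_const)
  have hQZv : ∀ z : ℝ, Continuous (fun v => QZ v z) := fun z =>
    hQZc.comp (continuous_id.prodMk continuous_const)
  -- T3 : parameter differentiation with fixed endpoints
  obtain ⟨M, hM⟩ := (isCompact_uIcc (a := (0:ℝ)) (b := u Z)|>.prod
    (isCompact_Icc (a := Z - 1) (b := Z + 1))).exists_bound_of_continuousOn
    hQZc.continuousOn
  have hT3 : HasDerivAt (fun z => ∫ v in (0:ℝ)..(u Z), Q v z)
      (∫ v in (0:ℝ)..(u Z), QZ v Z) Z := by
    refine (intervalIntegral.hasDerivAt_integral_of_dominated_loc_of_deriv_le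
      (F := fun x t => Q t x) (F' := fun x t => QZ t x) (bound := fun _ => M)
      (a := (0:ℝ)) (b := u Z) (μ := MeasureTheory.volume)
      (Metric.ball_mem_nhds Z one_pos) ?_ ?_ ?_ ?_ ?_ ?_).2
    · exact Eventually.of_forall fun x => (hQv x).aestronglyMeasurable
    · exact (hQv Z).intervalIntegrable _ _
    · exact (hQZv Z).aestronglyMeasurable
    · refine .of_forall fun t ht x hx => ?_
      refine hM (t, x) ⟨Set.uIoc_subset_uIcc ht, ?_⟩
      have := abs_lt.1 (by simpa [Real.dist_eq] using mem_ball.1 hx)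
      exact ⟨by linarith [this.1], by linarith [this.2]⟩
    · exact intervalIntegrable_const
    · exact .of_forall fun t _ x _ => hQZ t x
  -- T1 : FTC part
  have hk : ∀ w : ℝ, HasDerivAt (fun w => ∫ v in (u Z)..w, Q v Z) (Q w Z) w := by
    intro w
    exact intervalIntegral.integral_hasDerivAt_right
      ((hQv Z).intervalIntegrable _ _)
      (hQv Z).stronglyMeasurable.stronglyMeasurableAtFilter
      (hQv Z).continuousAt
  have hT1 : HasDerivWithinAt (fun z => ∫ v in (u Z)..(u z), Q v Z)
      (Q (u Z) Z * u') s Z := (hk (u Z)).comp_hasDerivWithinAt Z hu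
  -- T2 : little-o part
  have hT2 : HasDerivWithinAt
      (fun z => (∫ v in (u Z)..(u z), Q v z) - (∫ v in (u Z)..(u z), Q v Z)) 0 s Z := by
    obtain ⟨M', hM'⟩ := (isCompact_Icc (a := u Z - 1) (b := u Z + 1)|>.prod
      (isCompact_Icc (a := Z - 1) (b := Z + 1))).exists_bound_of_continuousOn
      hQZc.continuousOn
    have hM'0 : 0 ≤ M' := le_trans (norm_nonneg _) (hM' (u Z, Z) (by constructor <;>
      constructor <;> norm_num))
    obtain ⟨C, hC⟩ := hu.isBigO_sub.bound
    have hC0 : 0 ≤ C ∨ True := Or.inr trivial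
    rw [hasDerivWithinAt_iff_isLittleO]
    have hev : ∀ᶠ z in 𝓝[s] Z,
        ‖(∫ v in (u Z)..(u z), Q v z) - (∫ v in (u Z)..(u z), Q v Z)‖
          ≤ (C * M') * ‖(z - Z) * (z - Z)‖ := by
      have hsmall : ∀ᶠ z in 𝓝[s] Z, |z - Z| ≤ 1 ∧ C * |z - Z| ≤ 1 := by
        have h1 : ∀ᶠ z in 𝓝 Z, |z - Z| ≤ 1 ∧ C * |z - Z| ≤ 1 := by
          have h2 : ∀ᶠ z in 𝓝 Z, |z - Z| < min 1 (1 / (|C| + 1)) :=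
            eventually_abs_sub_lt Z (by simp [lt_min_iff]; positivity)
          filter_upwards [h2] with z hz
          have hz1 : |z - Z| < 1 := lt_of_lt_of_le hz (min_le_left _ _)
          have hz2 : |z - Z| < 1 / (|C| + 1) := lt_of_lt_of_le hz (min_le_right _ _)
          refine ⟨hz1.le, ?_⟩
          have : C * |z - Z| ≤ |C| * |z - Z| :=
            mul_le_mul_of_nonneg_right (le_abs_self C) (abs_nonneg _)
          have h3 : |C| * |z - Z| ≤ |C| * (1 / (|C| + 1)) :=
            mul_le_mul_of_nonneg_left hz2.le (abs_nonneg _)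
          have h4 : |C| * (1 / (|C| + 1)) ≤ 1 := by
            rw [mul_one_div, div_le_one (by positivity)]; linarith [abs_nonneg C]
          linarith
        exact nhdsWithin_le_nhds h1
      filter_upwards [hC.curry.mono fun x hx => Filter.eventually_pure.1 hx, hsmall] with z hz hzs
      have hzn : ‖z - Z‖ = |z - Z| := rfl
      have huz : |u z - u Z| ≤ C * |z - Z| := by simpa using hz
      have huz1 : |u z - u Z| ≤ 1 := le_trans huz hzs.2
      have hQdiff : ∀ v ∈ Set.uIoc (u Z) (u z), ‖Q v z - Q v Z‖ ≤ M' * |z - Z| := by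
        intro v hv
        have hvmem : v ∈ Set.Icc (u Z - 1) (u Z + 1) := by
          have h1 := (abs_le.1 huz1).1
          have h2 := (abs_le.1 huz1).2
          rcases Set.mem_uIoc.1 hv with h | h
          · exact ⟨by linarith [h.1], by linarith [h.2]⟩
          · exact ⟨by linarith [h.1], by linarith [h.2]⟩
        have hbound : ∀ t ∈ Set.Icc (Z - 1) (Z + 1), ‖QZ v t‖ ≤ M' := fun t ht =>
          hM' (v, t) ⟨hvmem, ht⟩
        have := Convex.norm_image_sub_le_of_norm_hasDerivWithin_le
          (f := fun t => Q v t) (f' := fun t => QZ v t) (s := Set.Icc (Z - 1) (Z + 1))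
          (fun t _ => (hQZ v t).hasDerivWithinAt) hbound (convex_Icc _ _)
          (x := Z) (y := z) (by constructor <;> norm_num)
          (by constructor <;> [linarith [abs_le.1 hzs.1]; linarith [(abs_le.1 hzs.1).2]])
        simpa [Real.norm_eq_abs] using this
      have hint : (∫ v in (u Z)..(u z), Q v z) - (∫ v in (u Z)..(u z), Q v Z)
          = ∫ v in (u Z)..(u z), (Q v z - Q v Z) :=
        (intervalIntegral.integral_sub ((hQv z).intervalIntegrable _ _)
          ((hQv Z).intervalIntegrable _ _)).symm
      rw [hint]
      have hb := intervalIntegral.norm_integral_le_of_norm_le_const hQdiff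
      have h1 : ‖∫ v in (u Z)..(u z), (Q v z - Q v Z)‖ ≤ M' * |z - Z| * (C * |z - Z|) := by
        refine le_trans hb ?_
        exact mul_le_mul_of_nonneg_left huz (by positivity)
      refine le_trans h1 (le_of_eq ?_)
      rw [Real.norm_eq_abs, abs_mul]
      ring
    have hO : (fun z => (∫ v in (u Z)..(u z), Q v z) - (∫ v in (u Z)..(u z), Q v Z))
        =O[𝓝[s] Z] fun z => (z - Z) * (z - Z) := Asymptotics.IsBigO.of_bound _ hev
    have ho : (fun z : ℝ => (z - Z) * (z - Z)) =o[𝓝[s] Z] fun z => z - Z := by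
      have h1 : (fun z : ℝ => z - Z) =o[𝓝[s] Z] (fun _ => (1:ℝ)) := by
        rw [Asymptotics.isLittleO_one_iff]
        have : Filter.Tendsto (fun z : ℝ => z - Z) (𝓝 Z) (𝓝 0) := by
          have h := tendsto_sub_nhds_zero_iff.2 (tendsto_id (x := 𝓝 Z))
          exact h
        exact this.mono_left nhdsWithin_le_nhds
      simpa using h1.mul_isBigO (Asymptotics.isBigO_refl (fun z : ℝ => z - Z) _)
    have := hO.trans_isLittleO ho
    simpa [sub_self] using this
  have hsum := (hT3.hasDerivWithinAt.add (hT1.add hT2))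
  have eqn : ∀ z : ℝ, (∫ v in (0:ℝ)..(u z), Q v z)
      = (∫ v in (0:ℝ)..(u Z), Q v z)
        + ((∫ v in (u Z)..(u z), Q v Z)
          + ((∫ v in (u Z)..(u z), Q v z) - (∫ v in (u Z)..(u z), Q v Z))) := by
    intro z
    have := intervalIntegral.integral_add_adjacent_intervals (μ := MeasureTheory.volume)
      ((hQv z).intervalIntegrable (0:ℝ) (u Z)) ((hQv z).intervalIntegrable (u Z) (u z))
    rw [← this]; ring
  have hfinal := hsum.congr (fun y _ => eqn y) (eqn Z)
  refine hfinal.congr_deriv ?_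
  ring

lemma u_deriv (P Pv PZ : ℝ → ℝ → ℝ) (E c δ A : ℝ)
    (hPvc : Continuous (fun p : ℝ × ℝ => Pv p.1 p.2))
    (hPv : ∀ v z : ℝ, HasDerivAt (fun w => P w z) (Pv v z) v)
    (hPZ : ∀ v z : ℝ, HasDerivAt (fun t => P v t) (PZ v z) z)
    (hδ : 0 < δ)
    (hlow : ∀ v z : ℝ, z ∈ Set.Icc (0:ℝ) 1 → δ ≤ Pv v z + E)
    (hPZb : ∀ v z : ℝ, z ∈ Set.Icc (0:ℝ) 1 → |PZ v z| ≤ c)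
    (u : ℝ → ℝ) (hhu : ∀ z ∈ Set.Icc (0:ℝ) 1, P (u z) z + E * u z = A)
    {Z : ℝ} (hZ : Z ∈ Set.Icc (0:ℝ) 1) :
    HasDerivWithinAt u (-PZ (u Z) Z / (Pv (u Z) Z + E)) (Set.Icc (0:ℝ) 1) Z := by
  set s : Set ℝ := Set.Icc (0:ℝ) 1 with hs
  have hxi : ∀ z ∈ s, ∃ ξ, (Pv ξ z + E) * (u z - u Z) = P (u Z) Z - P (u Z) z
      ∧ |ξ - u Z| ≤ |u z - u Z| := by
    intro z hz
    have hm : ∀ t : ℝ, HasDerivAt (fun t => P t z + E * t) (Pv t z + E) t := by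
      intro t
      exact (hPv t z).add (by simpa using (hasDerivAt_id t).const_mul E)
    have hrel : P (u z) z + E * u z = P (u Z) Z + E * u Z := by
      rw [hhu z hz, hhu Z hZ]
    rcases lt_trichotomy (u z) (u Z) with hlt | heq | hgt
    · obtain ⟨ξ, hmem, hξ⟩ := exists_hasDerivAt_eq_slope (fun t => P t z + E * t)
        (fun t => Pv t z + E) hlt
        (fun t _ => (hm t).continuousAt.continuousWithinAt)
        (fun t _ => hm t)
      refine ⟨ξ, ?_, ?_⟩
      · have hne : u Z - u z ≠ 0 := sub_ne_zero.2 hlt.ne'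
        rw [hξ, div_mul_eq_mul_div, div_eq_iff hne]
        linear_combination (u Z - u z) * hrel
      · rw [abs_of_nonpos (by linarith [hmem.2]), abs_of_nonpos (by linarith)]
        linarith [hmem.1]
    · refine ⟨u Z, ?_, by simp [heq]⟩
      have h0 : P (u Z) z = P (u Z) Z := by rw [heq] at hrel; linarith
      rw [heq, h0]; ring
    · obtain ⟨ξ, hmem, hξ⟩ := exists_hasDerivAt_eq_slope (fun t => P t z + E * t)
        (fun t => Pv t z + E) hgt
        (fun t _ => (hm t).continuousAt.continuousWithinAt)
        (fun t _ => hm t)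
      refine ⟨ξ, ?_, ?_⟩
      · have hne : u z - u Z ≠ 0 := sub_ne_zero.2 hgt.ne'
        rw [hξ, div_mul_eq_mul_div, div_eq_iff hne]
        linear_combination (u z - u Z) * hrel
      · rw [abs_of_nonneg (by linarith [hmem.1]), abs_of_nonneg (by linarith)]
        linarith [hmem.2]
  choose ξf hξeq hξle using hxi
  set ξg : ℝ → ℝ := fun z => if hz : z ∈ s then ξf z hz else u Z with hξg
  have hξgeq : ∀ z ∈ s, (Pv (ξg z) z + E) * (u z - u Z) = P (u Z) Z - P (u Z) z := by
    intro z hz; simp only [hξg, dif_pos hz]; exact hξeq z hz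
  have hξgle : ∀ z ∈ s, |ξg z - u Z| ≤ |u z - u Z| := by
    intro z hz; simp only [hξg, dif_pos hz]; exact hξle z hz
  have hPlip : ∀ z ∈ s, |P (u Z) Z - P (u Z) z| ≤ c * |Z - z| := by
    intro z hz
    have := Convex.norm_image_sub_le_of_norm_hasDerivWithin_le
      (f := fun t => P (u Z) t) (f' := fun t => PZ (u Z) t) (s := s)
      (fun t _ => (hPZ (u Z) t).hasDerivWithinAt)
      (fun t ht => by simpa [Real.norm_eq_abs] using hPZb (u Z) t ht)
      (convex_Icc _ _) hz hZ
    simpa [Real.norm_eq_abs] using this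
  have hLip : ∀ z ∈ s, |u z - u Z| ≤ (c / δ) * |z - Z| := by
    intro z hz
    have hd := hlow (ξg z) z hz
    have habs : (Pv (ξg z) z + E) * |u z - u Z| = |P (u Z) Z - P (u Z) z| := by
      rw [← abs_of_pos (lt_of_lt_of_le hδ hd), ← abs_mul, hξgeq z hz]
    have h1 : δ * |u z - u Z| ≤ |P (u Z) Z - P (u Z) z| := by
      rw [← habs]; exact mul_le_mul_of_nonneg_right hd (abs_nonneg _)
    have h2 := hPlip z hz
    rw [div_mul_eq_mul_div, le_div_iff₀ hδ]
    calc |u z - u Z| * δ = δ * |u z - u Z| := by ring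
      _ ≤ c * |Z - z| := le_trans h1 h2
      _ = c * |z - Z| := by rw [abs_sub_comm]
  rw [hasDerivWithinAt_iff_tendsto_slope]
  have hmem : ∀ᶠ z in 𝓝[s \ {Z}] Z, z ∈ s \ {Z} := self_mem_nhdsWithin
  have hnum : Tendsto (fun z => -((P (u Z) z - P (u Z) Z) / (z - Z)))
      (𝓝[s \ {Z}] Z) (𝓝 (-PZ (u Z) Z)) := by
    have h0 : Tendsto (slope (fun t => P (u Z) t) Z) (𝓝[≠] Z) (𝓝 (PZ (u Z) Z)) :=
      hasDerivAt_iff_tendsto_slope.1 (hPZ (u Z) Z)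
    have h1 : Tendsto (slope (fun t => P (u Z) t) Z) (𝓝[s \ {Z}] Z) (𝓝 (PZ (u Z) Z)) :=
      h0.mono_left (nhdsWithin_mono _ (fun x hx => hx.2))
    exact h1.neg.congr (fun z => by rw [slope_def_field])
  have hξt : Tendsto ξg (𝓝[s \ {Z}] Z) (𝓝 (u Z)) := by
    have hz0 : Tendsto (fun z => ξg z - u Z) (𝓝[s \ {Z}] Z) (𝓝 0) := by
      apply squeeze_zero_norm' (a := fun z => (c / δ) * |z - Z|)
      · filter_upwards [hmem] with z hz
        exact le_trans (hξgle z hz.1) (hLip z hz.1)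
      · have hco : Continuous (fun z : ℝ => (c / δ) * |z - Z|) :=
          continuous_const.mul ((continuous_id.sub continuous_const).abs)
        have := (hco.tendsto Z).mono_left (nhdsWithin_le_nhds (s := s \ {Z}))
        simpa using this
    have := hz0.add_const (u Z)
    simpa using this
  have hden : Tendsto (fun z => Pv (ξg z) z + E) (𝓝[s \ {Z}] Z) (𝓝 (Pv (u Z) Z + E)) := by
    have hpair : Tendsto (fun z => ((ξg z, z) : ℝ × ℝ)) (𝓝[s \ {Z}] Z) (𝓝 ((u Z, Z) : ℝ × ℝ)) :=
      hξt.prodMk_nhds (tendsto_id'.2 nhdsWithin_le_nhds)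
    have := (hPvc.tendsto ((u Z, Z) : ℝ × ℝ)).comp hpair
    exact (this.congr (fun z => rfl)).add_const E
  have hdne : Pv (u Z) Z + E ≠ 0 := ne_of_gt (lt_of_lt_of_le hδ (hlow _ _ hZ))
  have hG : Tendsto (fun z => -((P (u Z) z - P (u Z) Z) / (z - Z)) / (Pv (ξg z) z + E))
      (𝓝[s \ {Z}] Z) (𝓝 (-PZ (u Z) Z / (Pv (u Z) Z + E))) := hnum.div hden hdne
  refine hG.congr' ?_
  filter_upwards [hmem] with z hz
  have hz1 := hz.1
  have hzZ : z ≠ Z := hz.2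
  have hd := lt_of_lt_of_le hδ (hlow (ξg z) z hz1)
  have heq := hξgeq z hz1
  rw [slope_def_field]
  have hne : z - Z ≠ 0 := sub_ne_zero.2 hzZ
  field_simp
  linear_combination -heq

lemma subst_id (P Pv : ℝ → ℝ → ℝ) (E : ℝ)
    (hPvc : Continuous (fun p : ℝ × ℝ => Pv p.1 p.2))
    (hPv : ∀ v z : ℝ, HasDerivAt (fun w => P w z) (Pv v z) v)
    (h j : ℝ → ℝ → ℝ) (hdef : ∀ v Z : ℝ, h v Z = -P v Z - E * v)
    (z : ℝ) (hposd : ∀ v : ℝ, 0 < Pv v z + E)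
    (hl : ∀ v : ℝ, j (h v z) z = v) (hr : ∀ β : ℝ, h (j β z) z = β)
    (α : ℝ) :
    ∫ ξ in (h 0 z)..α, j ξ z
      = j α z * α + (∫ v in (0:ℝ)..(j α z), P v z) + E * (j α z) ^ 2 / 2 := by
  have hPcz : Continuous (fun x => P x z) :=
    continuous_iff_continuousAt.2 fun x => (hPv x z).continuousAt
  have hPvcz : Continuous (fun x => Pv x z) :=
    hPvc.comp (continuous_id.prodMk continuous_const)
  -- continuity of j(·, z)
  have hmono : StrictMono (fun v => P v z + E * v) := by
    apply strictMono_of_hasDerivAt_pos (f' := fun v => Pv v z + E)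
    · intro t; exact (hPv t z).add (by simpa using (hasDerivAt_id t).const_mul E)
    · exact hposd
  have hPEeq : ∀ β : ℝ, P (j β z) z + E * j β z = -β := by
    intro β
    have := hr β
    rw [hdef] at this
    linarith
  have hanti : ∀ p q : ℝ, p < q → j q z < j p z := by
    intro p q hpq
    by_contra hle
    push_neg at hle
    have h1 := hmono.monotone hle
    have h2 := hPEeq p
    have h3 := hPEeq q
    linarith
  have hsurj : Function.Surjective (fun t : ℝ => j (-t) z) := by
    intro v
    refine ⟨-(h v z), ?_⟩
    simp only [neg_neg]
    exact hl v
  have hsm : StrictMono (fun t : ℝ => j (-t) z) := fun a b hab =>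
    hanti (-b) (-a) (by linarith)
  have hc0 : Continuous (fun t : ℝ => j (-t) z) := by
    have := (StrictMono.orderIsoOfSurjective _ hsm hsurj).continuous
    rwa [StrictMono.coe_orderIsoOfSurjective] at this
  have hjc : Continuous (fun ξ : ℝ => j ξ z) := by
    have h1 : (fun ξ : ℝ => j ξ z) = (fun t : ℝ => j (-t) z) ∘ fun a : ℝ => -a := by
      funext ξ; simp
    rw [h1]
    exact hc0.comp continuous_neg
  -- change of variables
  set w := j α z with hw
  have hα : h w z = α := hr α
  have hderiv : ∀ x ∈ uIcc (0:ℝ) w, HasDerivAt (fun t => h t z) (-Pv x z - E) x := by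
    intro x _
    have h1 : HasDerivAt (fun t => -P t z - E * t) (-Pv x z - E) x := by
      exact (hPv x z).neg.sub (by simpa using (hasDerivAt_id x).const_mul E)
    simp only [hdef]
    exact h1
  have hchg := intervalIntegral.integral_comp_smul_deriv (a := (0:ℝ)) (b := w)
    (f := fun t => h t z) (f' := fun x => -Pv x z - E) (g := fun ξ => j ξ z)
    hderiv (hPvcz.neg.sub continuous_const).continuousOn hjc
  have h1 : ∫ ξ in (h 0 z)..α, j ξ z = ∫ x in (0:ℝ)..w, (-Pv x z - E) * x := by
    rw [← hα, ← hchg]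
    apply intervalIntegral.integral_congr
    intro x _
    simp [hl x]
  have hparts := intervalIntegral.integral_mul_deriv_eq_deriv_mul (a := (0:ℝ)) (b := w)
    (u := fun x => x) (u' := fun _ => (1:ℝ)) (v := fun x => h x z)
    (v' := fun x => -Pv x z - E)
    (fun x _ => hasDerivAt_id x) hderiv
    intervalIntegrable_const
    ((hPvcz.neg.sub continuous_const).intervalIntegrable _ _)
  have h3 : ∫ x in (0:ℝ)..w, h x z
      = -(∫ x in (0:ℝ)..w, P x z) - E * (w ^ 2 / 2) := by
    rw [intervalIntegral.integral_congr (g := fun x => -P x z - E * x)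
      (fun x _ => hdef x z)]
    have hEx : Continuous fun x : ℝ => E * x := continuous_const.mul continuous_id'
    rw [intervalIntegral.integral_sub (f := fun x => -P x z) (hPcz.neg.intervalIntegrable _ _)
      (hEx.intervalIntegrable _ _)]
    rw [intervalIntegral.integral_neg, intervalIntegral.integral_const_mul]
    have : ∫ x in (0:ℝ)..w, x = (w ^ 2 - 0 ^ 2) / 2 := integral_id
    rw [this]
    ring
  have h4 : ∫ x in (0:ℝ)..w, x * (-Pv x z - E) = ∫ x in (0:ℝ)..w, (-Pv x z - E) * x :=
    intervalIntegral.integral_congr (fun x _ => mul_comm _ _)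
  have h5 : ∫ x in (0:ℝ)..w, (1:ℝ) * h x z = ∫ x in (0:ℝ)..w, h x z :=
    intervalIntegral.integral_congr (fun x _ => one_mul _)
  rw [h1, ← h4, hparts, h5, h3]
  simp only [hα]
  ring



/-- Bound on the second `Z`-derivative of `∫_{h(0,Z)}^{α} j(ξ,Z) dξ`:
`|∂_{ZZ} (∫_{h(0,Z)}^α j(ξ,Z) dξ)| ≤ C̄ (1 + C̄/(E-Γ))`. -/
theorem stmt_10 (P Pv PZ PZZ : ℝ → ℝ → ℝ) (γ Γ E Cbar : ℝ) (hγ : 0 < γ)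
    (hP : ContDiff ℝ 2 (fun p : ℝ × ℝ => P p.1 p.2))
    (hPv : ∀ v Z : ℝ, HasDerivAt (fun w => P w Z) (Pv v Z) v)
    (hPZ : ∀ v Z : ℝ, HasDerivAt (fun z => P v z) (PZ v Z) Z)
    (hPZZ : ∀ v Z : ℝ, HasDerivAt (fun z => PZ v z) (PZZ v Z) Z)
    (hPvbounds : ∀ (v Z : ℝ), Z ∈ Set.Icc (0:ℝ) 1 →
      γ < -Pv v Z ∧ -Pv v Z < Γ)
    (hPZbound : ∀ (v Z : ℝ), Z ∈ Set.Icc (0:ℝ) 1 → |PZ v Z| < Cbar)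
    (hPZZbound : ∀ (v Z : ℝ), Z ∈ Set.Icc (0:ℝ) 1 →
      |∫ τ in (0:ℝ)..v, PZZ τ Z| < Cbar)
    (hE : Γ < E)
    (h : ℝ → ℝ → ℝ) (hdef : ∀ v Z, h v Z = -P v Z - E * v)
    (j : ℝ → ℝ → ℝ)
    (hjinv : ∀ Z ∈ Set.Icc (0:ℝ) 1,
      (∀ v : ℝ, j (h v Z) Z = v) ∧ (∀ α : ℝ, h (j α Z) Z = α)) :
    ∀ (α Z : ℝ), Z ∈ Set.Icc (0:ℝ) 1 →
      |deriv (fun z => deriv (fun z' => ∫ ξ in (h 0 z')..α, j ξ z') z) Z|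
        ≤ Cbar * (1 + Cbar / (E - Γ)) := by
  intro α Z hZ
  set f : ℝ → ℝ := fun z' => ∫ ξ in (h 0 z')..α, j ξ z' with hfdef
  set g : ℝ → ℝ := fun z => deriv f z with hgdef
  set s : Set ℝ := Set.Icc (0:ℝ) 1 with hsdef
  -- continuity package
  have hPc : Continuous (fun p : ℝ × ℝ => P p.1 p.2) := hP.continuous
  have hPvc : Continuous (fun p : ℝ × ℝ => Pv p.1 p.2) :=
    contDeriv_fst_eq P Pv (hP.of_le (by norm_num)) hPv
  have hPZ1 : ContDiff ℝ 1 (fun p : ℝ × ℝ => PZ p.1 p.2) := contDiff_snd_deriv P PZ hP hPZ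
  have hPZc : Continuous (fun p : ℝ × ℝ => PZ p.1 p.2) := hPZ1.continuous
  have hPZZc : Continuous (fun p : ℝ × ℝ => PZZ p.1 p.2) := contDeriv_snd_eq PZ PZZ hPZ1 hPZZ
  have hEΓ : 0 < E - Γ := by linarith
  have hCpos : 0 < Cbar := lt_of_le_of_lt (abs_nonneg _) (hPZbound 0 Z hZ)
  have hlow : ∀ v z : ℝ, z ∈ s → E - Γ ≤ Pv v z + E := by
    intro v z hz
    have := (hPvbounds v z hz).2
    linarith
  set u : ℝ → ℝ := fun z => j α z with hu
  have hhu : ∀ z ∈ s, P (u z) z + E * u z = -α := by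
    intro z hz
    have h0 := (hjinv z hz).2 α
    rw [hdef] at h0
    simp only [hu]
    linarith
  have hPZb : ∀ v z : ℝ, z ∈ s → |PZ v z| ≤ Cbar := fun v z hz => (hPZbound v z hz).le
  -- derivative of u within s
  have hud : ∀ W ∈ s, HasDerivWithinAt u (-PZ (u W) W / (Pv (u W) W + E)) s W :=
    fun W hW => u_deriv P Pv PZ E Cbar (E - Γ) (-α) hPvc hPv hPZ hEΓ hlow hPZb u hhu hW
  set φ : ℝ → ℝ := fun z => ∫ v in (0:ℝ)..(u z), PZ v z with hφ
  -- first derivative of f within s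
  have KEY : ∀ W ∈ s, HasDerivWithinAt f (φ W) s W := by
    intro W hW
    have hsub : ∀ z ∈ s, f z
        = u z * α + (∫ v in (0:ℝ)..(u z), P v z) + E * (u z) ^ 2 / 2 := by
      intro z hz
      exact subst_id P Pv E hPvc hPv h j hdef z
        (fun v => lt_of_lt_of_le hEΓ (hlow v z hz)) (hjinv z hz).1 (hjinv z hz).2 α
    have h1 : HasDerivWithinAt (fun z => u z * α)
        ((-PZ (u W) W / (Pv (u W) W + E)) * α) s W := (hud W hW).mul_const α
    have h2 := param_deriv P PZ hPc hPZc hPZ (hud W hW)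
    have h3 : HasDerivWithinAt (fun z => E * (u z) ^ 2 / 2)
        (E * (2 * u W ^ 1 * (-PZ (u W) W / (Pv (u W) W + E))) / 2) s W :=
      (((hud W hW).pow 2).const_mul E).div_const 2
    have hsum := (h1.add h2).add h3
    have hαeq : α = -P (u W) W - E * u W := by
      have := hhu W hW
      linarith
    have hd : HasDerivWithinAt
        (fun z => u z * α + (∫ v in (0:ℝ)..(u z), P v z) + E * (u z) ^ 2 / 2) (φ W) s W := by
      refine hsum.congr_deriv ?_
      simp only [hφ]
      rw [hαeq]
      ring
    exact hd.congr (fun y hy => hsub y hy) (hsub W hW)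
  have hgφ : ∀ z ∈ Set.Ioo (0:ℝ) 1, g z = φ z := by
    intro z hz
    have hmem : s ∈ 𝓝 z := by
      rw [hsdef]
      exact Icc_mem_nhds hz.1 hz.2
    have := (KEY z (Set.Ioo_subset_Icc_self hz)).hasDerivAt hmem
    rw [hgdef]
    exact this.deriv
  set ψ : ℝ := PZ (u Z) Z * (-PZ (u Z) Z / (Pv (u Z) Z + E))
      + ∫ v in (0:ℝ)..(u Z), PZZ v Z with hψ
  have KEY2 : HasDerivWithinAt φ ψ s Z := param_deriv PZ PZZ hPZc hPZZc hPZZ (hud Z hZ)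
  have hbound : |ψ| ≤ Cbar * (1 + Cbar / (E - Γ)) := by
    have hd : E - Γ ≤ Pv (u Z) Z + E := hlow _ _ hZ
    have hd0 : 0 < Pv (u Z) Z + E := lt_of_lt_of_le hEΓ hd
    have ha : |PZ (u Z) Z| ≤ Cbar := hPZb _ _ hZ
    have hI : |∫ v in (0:ℝ)..(u Z), PZZ v Z| ≤ Cbar := (hPZZbound (u Z) Z hZ).le
    have e1 : PZ (u Z) Z * (-PZ (u Z) Z / (Pv (u Z) Z + E))
        = -(PZ (u Z) Z ^ 2 / (Pv (u Z) Z + E)) := by ring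
    have e2 : |PZ (u Z) Z * (-PZ (u Z) Z / (Pv (u Z) Z + E))|
        = PZ (u Z) Z ^ 2 / (Pv (u Z) Z + E) := by
      rw [e1, abs_neg, abs_of_nonneg (by positivity)]
    have e3 : PZ (u Z) Z ^ 2 / (Pv (u Z) Z + E) ≤ Cbar ^ 2 / (E - Γ) := by
      apply div_le_div₀ (by positivity) ?_ hEΓ hd
      calc PZ (u Z) Z ^ 2 = |PZ (u Z) Z| ^ 2 := (sq_abs _).symm
        _ ≤ Cbar ^ 2 := by nlinarith [abs_nonneg (PZ (u Z) Z)]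
    have e4 : |ψ| ≤ |PZ (u Z) Z * (-PZ (u Z) Z / (Pv (u Z) Z + E))|
        + |∫ v in (0:ℝ)..(u Z), PZZ v Z| := abs_add_le _ _
    have e5 : Cbar * (1 + Cbar / (E - Γ)) = Cbar + Cbar ^ 2 / (E - Γ) := by
      field_simp
    rw [e5, e2] at *
    linarith
  by_cases hdiff : DifferentiableAt ℝ g Z
  · have hclos : Z ∈ closure (Set.Ioo (0:ℝ) 1) := by
      rw [closure_Ioo (by norm_num : (0:ℝ) ≠ 1)]
      exact hZ
    have hne : (𝓝[Set.Ioo (0:ℝ) 1] Z).NeBot := mem_closure_iff_nhdsWithin_neBot.1 hclos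
    have hgZ : g Z = φ Z := by
      have t1 : Filter.Tendsto g (𝓝[Set.Ioo (0:ℝ) 1] Z) (𝓝 (g Z)) :=
        hdiff.continuousAt.continuousWithinAt
      have t2 : Filter.Tendsto φ (𝓝[Set.Ioo (0:ℝ) 1] Z) (𝓝 (φ Z)) :=
        KEY2.continuousWithinAt.mono Set.Ioo_subset_Icc_self
      have t3 : Filter.Tendsto g (𝓝[Set.Ioo (0:ℝ) 1] Z) (𝓝 (φ Z)) := by
        refine t2.congr' ?_
        filter_upwards [self_mem_nhdsWithin] with z hz
        exact (hgφ z hz).symm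
      exact tendsto_nhds_unique t1 t3
    have h1 : HasDerivWithinAt g (deriv g Z) (Set.Ioo (0:ℝ) 1) Z :=
      hdiff.hasDerivAt.hasDerivWithinAt
    have h2 : HasDerivWithinAt φ (deriv g Z) (Set.Ioo (0:ℝ) 1) Z :=
      h1.congr (fun y hy => (hgφ y hy).symm) hgZ.symm
    have h3 : HasDerivWithinAt φ ψ (Set.Ioo (0:ℝ) 1) Z := KEY2.mono Set.Ioo_subset_Icc_self
    have hud2 : UniqueDiffWithinAt ℝ (Set.Ioo (0:ℝ) 1) Z :=
      uniqueDiffWithinAt_convex (convex_Ioo 0 1)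
        (by rw [interior_Ioo]; exact ⟨1/2, by norm_num⟩) hclos
    have heq : deriv g Z = ψ := hud2.eq_deriv _ h2 h3
    rw [heq]
    exact hbound
  · rw [deriv_zero_of_not_differentiableAt hdiff]
    have h0 : 0 ≤ Cbar / (E - Γ) := le_of_lt (div_pos hCpos hEΓ)
    simp only [abs_zero]
    nlinarith
end

section
/- Let ℰ, J: ℝⁿ → ℝ be C² with (γ-δ>0): EI ≤ D²ℰ ≤ (E+δ)I and (E+δ-γ)⁻¹I < D²J < (E-Γ)⁻¹I, E > Γ > γ > δ > 0. Define H(u,α) = ℰ(u) + αᵀu + J(α) on ℝⁿ × ℝⁿ. Then there exist μ, μ' > 0 such that μI ≤ D²H(u,α) ≤ μ'I on ℝ^{2n}; specifically, (u,α)ᵀD²H(u,α)(u,α) > ((γ-δ)/2)|u|² + ((γ-δ)/2)|α|²/((E+(δ-γ)/2)(E+δ-γ)) and (u,α)ᵀD²H(u,α)(u,α) ≤ (E+δ+1)|u|² + ((E-Γ)⁻¹+1)|α|². -/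
open RealInnerProductSpace

noncomputable def Lmap (n : ℕ) : (EuclideanSpace ℝ (Fin n) × EuclideanSpace ℝ (Fin n)) →L[ℝ]
    ((EuclideanSpace ℝ (Fin n) × EuclideanSpace ℝ (Fin n)) →L[ℝ] ℝ) :=
  ((ContinuousLinearMap.compL ℝ (EuclideanSpace ℝ (Fin n) × EuclideanSpace ℝ (Fin n))
        (EuclideanSpace ℝ (Fin n)) ℝ).flip
      (ContinuousLinearMap.fst ℝ (EuclideanSpace ℝ (Fin n)) (EuclideanSpace ℝ (Fin n)))).comp
    ((innerSL ℝ).comp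
      (ContinuousLinearMap.snd ℝ (EuclideanSpace ℝ (Fin n)) (EuclideanSpace ℝ (Fin n)))) +
  ((ContinuousLinearMap.compL ℝ (EuclideanSpace ℝ (Fin n) × EuclideanSpace ℝ (Fin n))
        (EuclideanSpace ℝ (Fin n)) ℝ).flip
      (ContinuousLinearMap.snd ℝ (EuclideanSpace ℝ (Fin n)) (EuclideanSpace ℝ (Fin n)))).comp
    ((innerSL ℝ).comp
      (ContinuousLinearMap.fst ℝ (EuclideanSpace ℝ (Fin n)) (EuclideanSpace ℝ (Fin n))))

lemma Lmap_apply {n : ℕ} (p w : EuclideanSpace ℝ (Fin n) × EuclideanSpace ℝ (Fin n)) :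
    Lmap n p w = ⟪p.2, w.1⟫ + ⟪p.1, w.2⟫ := by
  simp [Lmap]

lemma contDiff_B {n : ℕ} :
    ContDiff ℝ 2 (fun p : EuclideanSpace ℝ (Fin n) × EuclideanSpace ℝ (Fin n) => ⟪p.2, p.1⟫) :=
  (contDiff_snd).inner ℝ contDiff_fst

lemma fderiv_B {n : ℕ} (p : EuclideanSpace ℝ (Fin n) × EuclideanSpace ℝ (Fin n)) :
    fderiv ℝ (fun p : EuclideanSpace ℝ (Fin n) × EuclideanSpace ℝ (Fin n) => ⟪p.2, p.1⟫) p
      = Lmap n p := by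
  refine ContinuousLinearMap.ext fun w => ?_
  rw [fderiv_inner_apply ℝ (differentiable_snd p) (differentiable_fst p)]
  simp [Lmap_apply, real_inner_comm, fderiv_fst, fderiv_snd, mul_comm]

lemma iteratedFDeriv_B {n : ℕ} (p w : EuclideanSpace ℝ (Fin n) × EuclideanSpace ℝ (Fin n)) :
    iteratedFDeriv ℝ 2
      (fun p : EuclideanSpace ℝ (Fin n) × EuclideanSpace ℝ (Fin n) => ⟪p.2, p.1⟫) p ![w, w]
      = 2 * ⟪w.2, w.1⟫ := by
  rw [iteratedFDeriv_two_apply]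
  have h1 : fderiv ℝ
      (fun p : EuclideanSpace ℝ (Fin n) × EuclideanSpace ℝ (Fin n) => ⟪p.2, p.1⟫)
      = fun p => Lmap n p := funext fderiv_B
  rw [h1]
  have h2 : fderiv ℝ (fun p => Lmap n p) p = Lmap n := (Lmap n).fderiv
  rw [h2]
  show Lmap n w w = _
  rw [Lmap_apply, real_inner_comm w.1 w.2]
  ring

lemma arith (γ E δ a b : ℝ) (hδ : 0 < δ) (hγδ : δ < γ) (hγE : γ < E) :
    ((γ - δ) / 2) * a ^ 2 + ((γ - δ) / 2) * b ^ 2 / ((E + (δ - γ) / 2) * (E + δ - γ))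
      ≤ E * a ^ 2 - 2 * (a * b) + (E + δ - γ)⁻¹ * b ^ 2 := by
  have hs : (0:ℝ) < E + δ - γ := by linarith
  have hEk : (0:ℝ) < E + (δ - γ) / 2 := by linarith
  have hAs : (0:ℝ) < (E + (δ - γ) / 2) * (E + δ - γ) := mul_pos hEk hs
  have ht : (E + δ - γ)⁻¹ * (E + δ - γ) = 1 := inv_mul_cancel₀ hs.ne'
  have hu : ((E + (δ - γ) / 2) * (E + δ - γ))⁻¹ * ((E + (δ - γ) / 2) * (E + δ - γ)) = 1 :=
    inv_mul_cancel₀ hAs.ne'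
  have hconv : ((γ - δ) / 2) * b ^ 2 / ((E + (δ - γ) / 2) * (E + δ - γ))
      = ((γ - δ) / 2) * b ^ 2 * ((E + (δ - γ) / 2) * (E + δ - γ))⁻¹ := div_eq_mul_inv _ _
  rw [hconv]
  have keyeq : (E * a ^ 2 - 2 * (a * b) + (E + δ - γ)⁻¹ * b ^ 2
      - (((γ - δ) / 2) * a ^ 2
        + ((γ - δ) / 2) * b ^ 2 * ((E + (δ - γ) / 2) * (E + δ - γ))⁻¹))
      * ((E + (δ - γ) / 2) * (E + δ - γ))
      = (E + δ - γ) * ((E + (δ - γ) / 2) * a - b) ^ 2 := by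
    linear_combination ((E + (δ - γ) / 2) * b ^ 2) * ht - (((γ - δ) / 2) * b ^ 2) * hu
  nlinarith [keyeq, sq_nonneg ((E + (δ - γ) / 2) * a - b), hAs, hs]

/-- Uniform convexity with bounded Hessian of `H(u,α) = ℰ(u) + αᵀu + J(α)`:
there exist `μ, μ' > 0` with `μI ≤ D²H ≤ μ'I` on `ℝ²ⁿ`; specifically the
quadratic form of `D²H(u,α)` at the vector `(u,α)` is bounded below by
`((γ-δ)/2)‖u‖² + ((γ-δ)/2)‖α‖²/((E+(δ-γ)/2)(E+δ-γ))` and above by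
`(E+δ+1)‖u‖² + ((E-Γ)⁻¹+1)‖α‖²`. -/
theorem stmt_18 (n : ℕ) (γ Γ E δ : ℝ)
    (hδ : 0 < δ) (hγδ : δ < γ) (hΓγ : γ < Γ) (hEΓ : Γ < E)
    (ℰ J : EuclideanSpace ℝ (Fin n) → ℝ)
    (hℰ : ContDiff ℝ 2 ℰ) (hJ : ContDiff ℝ 2 J)
    (hℰbounds : ∀ (u w : EuclideanSpace ℝ (Fin n)),
      E * ‖w‖ ^ 2 ≤ iteratedFDeriv ℝ 2 ℰ u ![w, w] ∧
      iteratedFDeriv ℝ 2 ℰ u ![w, w] ≤ (E + δ) * ‖w‖ ^ 2)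
    (hJbounds : ∀ (α w : EuclideanSpace ℝ (Fin n)), w ≠ 0 →
      (E + δ - γ)⁻¹ * ‖w‖ ^ 2 < iteratedFDeriv ℝ 2 J α ![w, w] ∧
      iteratedFDeriv ℝ 2 J α ![w, w] < (E - Γ)⁻¹ * ‖w‖ ^ 2)
    (H : EuclideanSpace ℝ (Fin n) × EuclideanSpace ℝ (Fin n) → ℝ)
    (hH : ∀ p : EuclideanSpace ℝ (Fin n) × EuclideanSpace ℝ (Fin n),
      H p = ℰ p.1 + ⟪p.2, p.1⟫ + J p.2) :
    (∃ μ μ' : ℝ, 0 < μ ∧ 0 < μ' ∧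
      ∀ (p w : EuclideanSpace ℝ (Fin n) × EuclideanSpace ℝ (Fin n)),
        μ * (‖w.1‖ ^ 2 + ‖w.2‖ ^ 2) ≤ iteratedFDeriv ℝ 2 H p ![w, w] ∧
        iteratedFDeriv ℝ 2 H p ![w, w] ≤ μ' * (‖w.1‖ ^ 2 + ‖w.2‖ ^ 2)) ∧
    ∀ p : EuclideanSpace ℝ (Fin n) × EuclideanSpace ℝ (Fin n), p ≠ 0 →
      ((γ - δ) / 2) * ‖p.1‖ ^ 2
          + ((γ - δ) / 2) * ‖p.2‖ ^ 2 / ((E + (δ - γ) / 2) * (E + δ - γ))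
        < iteratedFDeriv ℝ 2 H p ![p, p] ∧
      iteratedFDeriv ℝ 2 H p ![p, p]
        ≤ (E + δ + 1) * ‖p.1‖ ^ 2 + ((E - Γ)⁻¹ + 1) * ‖p.2‖ ^ 2 := by
  have hs : (0:ℝ) < E + δ - γ := by linarith
  have hEΓpos : (0:ℝ) < E - Γ := by linarith
  have hEk : (0:ℝ) < E + (δ - γ) / 2 := by linarith
  have hk : (0:ℝ) < (γ - δ) / 2 := by linarith
  -- the key formula for the Hessian of H
  have key : ∀ p w : EuclideanSpace ℝ (Fin n) × EuclideanSpace ℝ (Fin n),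
      iteratedFDeriv ℝ 2 H p ![w, w]
        = iteratedFDeriv ℝ 2 ℰ p.1 ![w.1, w.1] + 2 * ⟪w.2, w.1⟫
          + iteratedFDeriv ℝ 2 J p.2 ![w.2, w.2] := by
    intro p w
    have hHfun : H = (ℰ ∘ (Prod.fst : EuclideanSpace ℝ (Fin n) × EuclideanSpace ℝ (Fin n)
        → EuclideanSpace ℝ (Fin n))) +
        ((fun p : EuclideanSpace ℝ (Fin n) × EuclideanSpace ℝ (Fin n) => ⟪p.2, p.1⟫)
          + (J ∘ (Prod.snd : EuclideanSpace ℝ (Fin n) × EuclideanSpace ℝ (Fin n) → EuclideanSpace ℝ (Fin n)))) := by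
      funext q
      simp [hH q, Function.comp]
      ring
    have c1 : ContDiff ℝ (2:ℕ) (ℰ ∘ (Prod.fst : EuclideanSpace ℝ (Fin n) × EuclideanSpace ℝ (Fin n) → EuclideanSpace ℝ (Fin n))) := by
      exact_mod_cast hℰ.comp contDiff_fst
    have c2 : ContDiff ℝ (2:ℕ)
        ((fun p : EuclideanSpace ℝ (Fin n) × EuclideanSpace ℝ (Fin n) => ⟪p.2, p.1⟫)
          + (J ∘ (Prod.snd : EuclideanSpace ℝ (Fin n) × EuclideanSpace ℝ (Fin n) → EuclideanSpace ℝ (Fin n)))) := by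
      exact_mod_cast contDiff_B.add (hJ.comp contDiff_snd)
    have c3 : ContDiff ℝ (2:ℕ)
        (fun p : EuclideanSpace ℝ (Fin n) × EuclideanSpace ℝ (Fin n) => ⟪p.2, p.1⟫) := by
      exact_mod_cast contDiff_B
    have c4 : ContDiff ℝ (2:ℕ) (J ∘ (Prod.snd : EuclideanSpace ℝ (Fin n) × EuclideanSpace ℝ (Fin n) → EuclideanSpace ℝ (Fin n))) := by
      exact_mod_cast hJ.comp contDiff_snd
    rw [hHfun, iteratedFDeriv_add_apply c1.contDiffAt c2.contDiffAt, iteratedFDeriv_add_apply c3.contDiffAt c4.contDiffAt]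
    have e1 : iteratedFDeriv ℝ 2 (ℰ ∘ Prod.fst) p ![w, w]
        = iteratedFDeriv ℝ 2 ℰ p.1 ![w.1, w.1] := by
      have h := (ContinuousLinearMap.fst ℝ (EuclideanSpace ℝ (Fin n))
          (EuclideanSpace ℝ (Fin n))).iteratedFDeriv_comp_right hℰ p (le_refl 2)
      rw [ContinuousLinearMap.coe_fst'] at h
      rw [h, ContinuousMultilinearMap.compContinuousLinearMap_apply]
      congr 1
      ext i
      fin_cases i <;> rfl
    have e2 : iteratedFDeriv ℝ 2 (J ∘ (Prod.snd : EuclideanSpace ℝ (Fin n) × EuclideanSpace ℝ (Fin n) → EuclideanSpace ℝ (Fin n))) p ![w, w]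
        = iteratedFDeriv ℝ 2 J p.2 ![w.2, w.2] := by
      have h := (ContinuousLinearMap.snd ℝ (EuclideanSpace ℝ (Fin n))
          (EuclideanSpace ℝ (Fin n))).iteratedFDeriv_comp_right hJ p (le_refl 2)
      rw [ContinuousLinearMap.coe_snd'] at h
      rw [h, ContinuousMultilinearMap.compContinuousLinearMap_apply]
      congr 1
      ext i
      fin_cases i <;> rfl
    simp only [ContinuousMultilinearMap.add_apply, e1, e2, iteratedFDeriv_B]
    ring
  -- nonstrict bounds for the J term
  have hJle : ∀ (α w : EuclideanSpace ℝ (Fin n)),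
      (E + δ - γ)⁻¹ * ‖w‖ ^ 2 ≤ iteratedFDeriv ℝ 2 J α ![w, w] ∧
      iteratedFDeriv ℝ 2 J α ![w, w] ≤ (E - Γ)⁻¹ * ‖w‖ ^ 2 := by
    intro α w
    by_cases hw : w = 0
    · subst hw
      have h0 : iteratedFDeriv ℝ 2 J α ![(0:EuclideanSpace ℝ (Fin n)), 0] = 0 :=
        (iteratedFDeriv ℝ 2 J α).map_coord_zero (0 : Fin 2) rfl
      simp [h0]
    · exact ⟨(hJbounds α w hw).1.le, (hJbounds α w hw).2.le⟩
  have hinner : ∀ w : EuclideanSpace ℝ (Fin n) × EuclideanSpace ℝ (Fin n),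
      -(‖w.2‖ * ‖w.1‖) ≤ ⟪w.2, w.1⟫ ∧ ⟪w.2, w.1⟫ ≤ ‖w.2‖ * ‖w.1‖ := fun w =>
    ⟨neg_le_of_neg_le (by
        have := abs_real_inner_le_norm w.2 w.1
        rw [abs_le] at this; linarith [this.1]),
      real_inner_le_norm w.2 w.1⟩
  -- lower bound for the quadratic form (nonstrict)
  have lower : ∀ p w : EuclideanSpace ℝ (Fin n) × EuclideanSpace ℝ (Fin n),
      ((γ - δ) / 2) * ‖w.1‖ ^ 2
          + ((γ - δ) / 2) * ‖w.2‖ ^ 2 / ((E + (δ - γ) / 2) * (E + δ - γ))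
        ≤ iteratedFDeriv ℝ 2 H p ![w, w] := by
    intro p w
    rw [key p w]
    have h1 := (hℰbounds p.1 w.1).1
    have h2 := (hJle p.2 w.2).1
    have h3 := (hinner w).1
    have h4 := arith γ E δ ‖w.1‖ ‖w.2‖ hδ hγδ (by linarith)
    linarith
  have upper : ∀ p w : EuclideanSpace ℝ (Fin n) × EuclideanSpace ℝ (Fin n),
      iteratedFDeriv ℝ 2 H p ![w, w]
        ≤ (E + δ + 1) * ‖w.1‖ ^ 2 + ((E - Γ)⁻¹ + 1) * ‖w.2‖ ^ 2 := by
    intro p w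
    rw [key p w]
    have h1 := (hℰbounds p.1 w.1).2
    have h2 := (hJle p.2 w.2).2
    have h3 := (hinner w).2
    nlinarith [sq_nonneg (‖w.1‖ - ‖w.2‖)]
  constructor
  · refine ⟨min ((γ - δ) / 2) (((γ - δ) / 2) / ((E + (δ - γ) / 2) * (E + δ - γ))),
      max (E + δ + 1) ((E - Γ)⁻¹ + 1), ?_, ?_, ?_⟩
    · exact lt_min hk (by positivity)
    · exact lt_max_of_lt_left (by linarith)
    · intro p w
      constructor
      · refine le_trans ?_ (lower p w)
        have ha : (0:ℝ) ≤ ‖w.1‖ ^ 2 := sq_nonneg _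
        have hb : (0:ℝ) ≤ ‖w.2‖ ^ 2 := sq_nonneg _
        have m1 := min_le_left ((γ - δ) / 2) (((γ - δ) / 2) / ((E + (δ - γ) / 2) * (E + δ - γ)))
        have m2 := min_le_right ((γ - δ) / 2) (((γ - δ) / 2) / ((E + (δ - γ) / 2) * (E + δ - γ)))
        have : ((γ - δ) / 2) * ‖w.2‖ ^ 2 / ((E + (δ - γ) / 2) * (E + δ - γ))
            = (((γ - δ) / 2) / ((E + (δ - γ) / 2) * (E + δ - γ))) * ‖w.2‖ ^ 2 := by ring
        rw [mul_add, this]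
        exact add_le_add (mul_le_mul_of_nonneg_right m1 ha)
          (mul_le_mul_of_nonneg_right m2 hb)
      · refine le_trans (upper p w) ?_
        have ha : (0:ℝ) ≤ ‖w.1‖ ^ 2 := sq_nonneg _
        have hb : (0:ℝ) ≤ ‖w.2‖ ^ 2 := sq_nonneg _
        rw [mul_add]
        exact add_le_add
          (mul_le_mul_of_nonneg_right (le_max_left _ _) ha)
          (mul_le_mul_of_nonneg_right (le_max_right _ _) hb)
  · intro p hp
    refine ⟨?_, upper p p⟩
    by_cases hp2 : p.2 = 0
    · have hp1 : p.1 ≠ 0 := by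
        intro h1
        exact hp (Prod.ext h1 hp2)
      have ha : (0:ℝ) < ‖p.1‖ ^ 2 := by
        have := norm_pos_iff.2 hp1
        positivity
      rw [key p p]
      have h1 := (hℰbounds p.1 p.1).1
      have h0 : iteratedFDeriv ℝ 2 J p.2 ![p.2, p.2] = 0 := by
        exact (iteratedFDeriv ℝ 2 J p.2).map_coord_zero (0 : Fin 2) (by simp [hp2])
      have hinner0 : ⟪p.2, p.1⟫ = (0:ℝ) := by rw [hp2, inner_zero_left]
      have hb : ‖p.2‖ = (0:ℝ) := by rw [hp2, norm_zero]
      rw [h0, hinner0, hb]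
      have hz : ((γ - δ) / 2) * (0:ℝ) ^ 2 / ((E + (δ - γ) / 2) * (E + δ - γ)) = 0 := by
        simp
      rw [hz]
      have hEk2 : ((γ - δ) / 2) * ‖p.1‖ ^ 2 < E * ‖p.1‖ ^ 2 := by
        apply mul_lt_mul_of_pos_right _ ha
        linarith
      linarith
    · rw [key p p]
      have h1 := (hℰbounds p.1 p.1).1
      have h2 := (hJbounds p.2 p.2 hp2).1
      have h3 := (hinner p).1
      have h4 := arith γ E δ ‖p.1‖ ‖p.2‖ hδ hγδ (by linarith)
      linarith
end
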